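/- Let Φ be a root system in E with a fixed set of positive roots Φ^+, and let T' ⊆ Φ^+ be a closed subset with T' ≠ Φ^+. Then there exists a root γ ∈ Φ^+ with γ ∉ T' such that T' ∪ {γ} is closed. -/

import Mathlib

open scoped RealInnerProductSpace

/-- The reflection determined by a root `α`: `s_α(x) = x - (2(x,α)/(α,α)) α`. -/
noncomputable def reflectRoot {E : Type*} [NormedAddCommGroup E] [InnerProductSpace ℝ E] (α x : E) : E :=
  x - (2 * ⟪x, α⟫ / ⟪α, α⟫) • α

/-- A root system in a finite-dimensional real inner product space. -/
def IsRootSystem {E : Type*} [NormedAddCommGroup E] [InnerProductSpace ℝ E] (Φ : Set E) : Prop :=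
  Φ.Finite ∧ Submodule.span ℝ Φ = ⊤ ∧ (0 : E) ∉ Φ ∧
    (∀ α ∈ Φ, ∀ t : ℝ, t • α ∈ Φ → t • α = α ∨ t • α = -α) ∧
    (∀ α ∈ Φ, ∀ β ∈ Φ, reflectRoot α β ∈ Φ) ∧
    (∀ α ∈ Φ, ∀ β ∈ Φ, ∃ n : ℤ, 2 * ⟪β, α⟫ / ⟪α, α⟫ = (n : ℝ))

/-- `T` is a closed subset of the root system `Φ`. -/
def IsClosedSub {E : Type*} [AddCommGroup E] (Φ T : Set E) : Prop :=
  T ⊆ Φ ∧ ∀ α ∈ T, ∀ β ∈ T, α + β ∈ Φ → α + β ∈ T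

/-- The symmetric part `T^r = {α ∈ T | -α ∈ T}`. -/
def symmPart {E : Type*} [AddCommGroup E] (T : Set E) : Set E := {α ∈ T | -α ∈ T}

/-- The special part `T^u = {α ∈ T | -α ∉ T}`. -/
def specPart {E : Type*} [AddCommGroup E] (T : Set E) : Set E := {α ∈ T | -α ∉ T}

/-- `T + T`: elements of `T` that are sums of two elements of `T`. -/
def sumSet {E : Type*} [AddCommGroup E] (T : Set E) : Set E :=
  {γ ∈ T | ∃ α ∈ T, ∃ β ∈ T, γ = α + β}

/-- The Weyl group of `Φ`: the subgroup of linear automorphisms of `E` generated by the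
reflections in the roots. -/
def weylGroup {E : Type*} [NormedAddCommGroup E] [InnerProductSpace ℝ E] (Φ : Set E) :
    Subgroup (E ≃ₗ[ℝ] E) :=
  Subgroup.closure {w | ∃ α ∈ Φ, ∀ x, w x = reflectRoot α x}

/-- `Φp` is a set of positive roots of `Φ`. -/
def IsPositiveSystem {E : Type*} [NormedAddCommGroup E] [InnerProductSpace ℝ E]
    (Φ Φp : Set E) : Prop :=
  ∃ f : E →ₗ[ℝ] ℝ, (∀ α ∈ Φ, f α ≠ 0) ∧ Φp = {α ∈ Φ | 0 < f α}

/-- A closed subset `T' ⊊ Φ⁺` can be enlarged inside `Φ⁺` by one root while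
staying closed. -/
theorem exists_root_insert_closed {E : Type*} [NormedAddCommGroup E]
    [InnerProductSpace ℝ E] [FiniteDimensional ℝ E] (Φ Φp T' : Set E)
    (hΦ : IsRootSystem Φ) (hΦp : IsPositiveSystem Φ Φp)
    (hT' : IsClosedSub Φ T') (hsub : T' ⊆ Φp) (hne : T' ≠ Φp) :
    ∃ γ ∈ Φp, γ ∉ T' ∧ IsClosedSub Φ (T' ∪ {γ}) := by
  obtain ⟨hfin, -, hzero, honly, -, -⟩ := hΦ
  obtain ⟨f, hf0, hfp⟩ := hΦp
  have hΦpΦ : Φp ⊆ Φ := by rw [hfp]; exact Set.sep_subset _ _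
  have hSne : (Φp \ T').Nonempty := by
    rw [Set.diff_nonempty]
    intro h
    exact hne (Set.Subset.antisymm hsub h)
  have hSfin : (Φp \ T').Finite := (hfin.subset hΦpΦ).diff
  obtain ⟨γ, hγS, hγmax⟩ := Set.Finite.exists_maximalFor f _ hSfin hSne
  obtain ⟨hγp, hγT⟩ := hγS
  have hγΦ : γ ∈ Φ := hΦpΦ hγp
  have hpos : ∀ x ∈ Φp, 0 < f x := by
    intro x hx; rw [hfp] at hx; exact hx.2
  refine ⟨γ, hγp, hγT, ⟨?_, ?_⟩⟩
  · rintro x (hx | hx)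
    · exact hΦpΦ (hsub hx)
    · rw [Set.mem_singleton_iff] at hx; subst hx; exact hγΦ
  · -- key step: closedness
    have key : ∀ α ∈ T', α + γ ∈ Φ → α + γ ∈ T' := by
      intro α hα hsum
      by_contra hδ
      have hδp : α + γ ∈ Φp := by
        rw [hfp]
        refine ⟨hsum, ?_⟩
        rw [map_add]
        exact add_pos (hpos α (hsub hα)) (hpos γ hγp)
      have hfle : f γ ≤ f (α + γ) := by
        rw [map_add]
        nlinarith [hpos α (hsub hα)]
      have := @hγmax (α + γ) ⟨hδp, hδ⟩ hfle
      rw [map_add] at this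
      nlinarith [hpos α (hsub hα)]
    rintro α (hα | hα) β (hβ | hβ) hsum
    · exact Or.inl (hT'.2 α hα β hβ hsum)
    · rw [Set.mem_singleton_iff] at hβ; subst hβ
      exact Or.inl (key α hα hsum)
    · rw [Set.mem_singleton_iff] at hα; subst hα
      rw [add_comm] at hsum ⊢
      exact Or.inl (key β hβ hsum)
    · rw [Set.mem_singleton_iff] at hα hβ
      exfalso
      rw [hα, hβ] at hsum
      have h2 : (2 : ℝ) • γ = γ + γ := two_smul ℝ γ
      rcases honly γ hγΦ 2 (h2 ▸ hsum) with h | h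
      · rw [h2, add_eq_left] at h
        exact hzero (h ▸ hγΦ)
      · have h3 : (3 : ℝ) • γ = 0 := by
          rw [show (3:ℝ) = 2 + 1 by norm_num, add_smul, one_smul, h]
          simp
        rcases smul_eq_zero.mp h3 with h' | h'
        · norm_num at h'
        · exact hzero (h' ▸ hγΦ)
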